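/- Let F be a field of characteristic zero and L a finite-dimensional Lie algebra over F. Let S be a Lie subalgebra of L that is semisimple as a Lie algebra and is a vector-space complement of the solvable radical Rad(L): the underlying subspace of S and the underlying subspace of Rad(L) are complementary submodules of L. Then every Lie ideal I of L decomposes as I = (I ∩ S) ⊕ (I ∩ Rad(L)); that is, the underlying subspace of I equals the sum of the subspaces I ∩ S and I ∩ Rad(L), and moreover ⁅I ∩ S, Rad(L)⁆ ⊆ I ∩ Rad(L). -/

import Mathlib

/-- Given a Levi decomposition `L = S ⊕ Rad(L)` of a finite-dimensional Lie algebra over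
a field of characteristic zero, every Lie ideal `I` satisfies
`I = (I ∩ S) ⊕ (I ∩ Rad L)` and `⁅I ∩ S, Rad L⁆ ⊆ I ∩ Rad L`. -/
theorem lieIdeal_decomposition_levi
    (F : Type*) [Field F] [CharZero F]
    (L : Type*) [LieRing L] [LieAlgebra F L] [FiniteDimensional F L]
    (S : LieSubalgebra F L) (hS : LieAlgebra.IsSemisimple F S)
    (hcompl : IsCompl S.toSubmodule (LieAlgebra.radical F L).toSubmodule) :
    ∀ I : LieIdeal F L,
      I.toSubmodule =
        (I.toSubmodule ⊓ S.toSubmodule) ⊔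
          (I.toSubmodule ⊓ (LieAlgebra.radical F L).toSubmodule) ∧
      ∀ x ∈ I.toSubmodule ⊓ S.toSubmodule, ∀ y ∈ LieAlgebra.radical F L,
        ⁅x, y⁆ ∈ I.toSubmodule ⊓ (LieAlgebra.radical F L).toSubmodule := by
  haveI := hS
  intro I
  set R : LieIdeal F L := LieAlgebra.radical F L with hR
  -- the projection of `I` to `S`, realized as `S ∩ (I + R)`
  set M : LieIdeal F S := LieIdeal.comap S.incl (I ⊔ R) with hM
  have mem_M : ∀ x : S, x ∈ M ↔ (x : L) ∈ I ⊔ R := fun x => Iff.rfl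
  -- `M` is perfect
  have Meq : ⁅M, M⁆ = M := by
    set N : LieIdeal F S := ⁅M, M⁆ with hN
    have hNle : N ≤ M := LieSubmodule.lie_le_left M M
    have habs : M ⊓ Nᶜ = ⊥ := by
      have hCC : ⁅M ⊓ Nᶜ, M ⊓ Nᶜ⁆ = ⊥ := by
        have hbot : N ⊓ Nᶜ = ⊥ := inf_compl_eq_bot
        rw [eq_bot_iff, ← hbot]
        exact le_inf (LieSubmodule.mono_lie inf_le_left inf_le_left)
          (le_trans (LieSubmodule.lie_le_left _ _) inf_le_right)
      have habel : IsLieAbelian ↥(M ⊓ Nᶜ) :=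
        (LieSubmodule.lie_abelian_iff_lie_self_eq_bot _).mpr hCC
      exact (LieAlgebra.hasTrivialRadical_iff_no_abelian_ideals F S).mp
        inferInstance _ habel
    calc N = (M ⊓ N) ⊔ (M ⊓ Nᶜ) := by rw [inf_eq_right.mpr hNle, habs, sup_bot_eq]
    _ = M ⊓ (N ⊔ Nᶜ) := (inf_sup_left M N Nᶜ).symm
    _ = M := by rw [sup_compl_eq_top, inf_top_eq]
  -- main induction: `M ⊆ I + R⁽ᵏ⁾`
  have key : ∀ k : ℕ, ∀ x : S, x ∈ M →
      (x : L) ∈ I.toSubmodule ⊔ (LieAlgebra.derivedSeriesOfIdeal F L k R).toSubmodule := by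
    intro k
    induction k with
    | zero =>
      intro x hx
      rw [LieAlgebra.derivedSeriesOfIdeal_zero, ← LieSubmodule.sup_toSubmodule]
      exact (mem_M x).mp hx
    | succ k ih =>
      intro x hx
      rw [← Meq] at hx
      rw [← LieSubmodule.mem_toSubmodule, LieSubmodule.lieIdeal_oper_eq_linear_span'] at hx
      refine Submodule.span_induction ?_ ?_ ?_ ?_ hx
      · rintro m ⟨u, hu, v, hv, rfl⟩
        obtain ⟨a, ha, b, hb, hab⟩ := Submodule.mem_sup.mp (ih u hu)
        obtain ⟨c, hc, d, hd, hcd⟩ := Submodule.mem_sup.mp (ih v hv)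
        have hbrack : (↑⁅u, v⁆ : L) = ⁅(u : L), (v : L)⁆ := rfl
        rw [hbrack, ← hab, ← hcd, add_lie, lie_add, lie_add]
        have h1 : ⁅a, c⁆ ∈ I := I.lie_mem ((LieSubmodule.mem_toSubmodule _).mp hc)
        have h2 : ⁅a, d⁆ ∈ I := by
          rw [← lie_skew]
          exact neg_mem (I.lie_mem ((LieSubmodule.mem_toSubmodule _).mp ha))
        have h3 : ⁅b, c⁆ ∈ I := I.lie_mem ((LieSubmodule.mem_toSubmodule _).mp hc)
        have h4 : ⁅b, d⁆ ∈ LieAlgebra.derivedSeriesOfIdeal F L (k + 1) R := by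
          rw [LieAlgebra.derivedSeriesOfIdeal_succ]
          exact LieSubmodule.lie_mem_lie ((LieSubmodule.mem_toSubmodule _).mp hb)
            ((LieSubmodule.mem_toSubmodule _).mp hd)
        exact add_mem (add_mem (Submodule.mem_sup_left h1) (Submodule.mem_sup_left h2))
          (add_mem (Submodule.mem_sup_left h3) (Submodule.mem_sup_right h4))
      · show (0 : L) ∈ _
        exact Submodule.zero_mem _
      · intro y z _ _ hy hz
        exact add_mem hy hz
      · intro t y _ hy
        exact Submodule.smul_mem _ t hy
  -- conclude `M ⊆ I` using solvability of the radical
  obtain ⟨k, hk⟩ : ∃ k, LieAlgebra.derivedSeries F ↥R k = ⊥ :=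
    LieAlgebra.IsSolvable.solvable (R := F) (L := ↥R)
  have hk' : LieAlgebra.derivedSeriesOfIdeal F L k R = ⊥ :=
    (LieIdeal.derivedSeries_eq_bot_iff R k).mp hk
  have keyI : ∀ x : S, x ∈ M → (x : L) ∈ I.toSubmodule := by
    intro x hx
    have := key k x hx
    rwa [hk', LieSubmodule.bot_toSubmodule, sup_bot_eq] at this
  constructor
  · apply le_antisymm
    · intro x hx
      have hxtop : x ∈ S.toSubmodule ⊔ R.toSubmodule := by
        rw [codisjoint_iff.mp hcompl.codisjoint]; trivial
      obtain ⟨s, hs, r, hr, hsr⟩ := Submodule.mem_sup.mp hxtop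
      have hsM : (⟨s, hs⟩ : S) ∈ M := by
        rw [mem_M, ← LieSubmodule.mem_toSubmodule, LieSubmodule.sup_toSubmodule]
        show s ∈ I.toSubmodule ⊔ R.toSubmodule
        have hseq : s = x - r := by rw [← hsr]; abel
        rw [hseq]
        exact sub_mem (Submodule.mem_sup_left hx) (Submodule.mem_sup_right hr)
      have hsI : s ∈ I.toSubmodule := keyI _ hsM
      have hrI : r ∈ I.toSubmodule := by
        have : r = x - s := by rw [← hsr]; abel
        rw [this]; exact sub_mem hx hsI
      rw [← hsr]
      exact add_mem (Submodule.mem_sup_left ⟨hsI, hs⟩) (Submodule.mem_sup_right ⟨hrI, hr⟩)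
    · exact sup_le inf_le_left inf_le_left
  · rintro x ⟨hxI, _⟩ y hy
    constructor
    · rw [← lie_skew]
      exact neg_mem (I.lie_mem hxI)
    · exact R.lie_mem hy
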